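/- arXiv:1601.02231 — 2 statements merged into one kernel-verified Lean document; each statement's English description precedes it below -/
import Mathlib

section
/- For all integers $n \ge 2$ and $1 \le k \le n-1$, the constant $\gamma_{n,k} = \omega_n^{(n-k)/n}/\omega_{n-k}$ satisfies $e^{-k/2} < \gamma_{n,k} < 1$, where $\omega_m$ is the volume of the unit Euclidean ball in $\mathbb{R}^m$. -/
open MeasureTheory

noncomputable section

/-- `ω_m`: the volume of the unit Euclidean ball in `ℝ^m`. -/
def unitBallVol (m : ℕ) : ℝ :=
  (volume (Metric.ball (0 : EuclideanSpace ℝ (Fin m)) 1)).toReal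

namespace GammaBoundsAux
open Real


/-- `L c = log Γ(c+1)`. -/
def L (c : ℝ) : ℝ := Real.log (Real.Gamma (c + 1))

lemma L_add_one {c : ℝ} (hc : 0 < c) : L (c + 1) = Real.log (c + 1) + L c := by
  have h1 : (0:ℝ) < c + 1 := by linarith
  have h2 : Real.Gamma (c + 1 + 1) = (c + 1) * Real.Gamma (c + 1) :=
    Real.Gamma_add_one h1.ne'
  rw [L, L, h2, Real.log_mul h1.ne' (Real.Gamma_pos_of_pos h1).ne']

lemma logGamma_combo {x y a b : ℝ} (hx : 0 < x) (hy : 0 < y) (ha : 0 ≤ a) (hb : 0 ≤ b)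
    (hab : a + b = 1) :
    Real.log (Real.Gamma (a * x + b * y)) ≤
      a * Real.log (Real.Gamma x) + b * Real.log (Real.Gamma y) := by
  have := Real.convexOn_log_Gamma.2 (Set.mem_Ioi.mpr hx) (Set.mem_Ioi.mpr hy) ha hb hab
  simpa [Function.comp, smul_eq_mul] using this

lemma slope_mono {x y : ℝ} (hx : 0 < x) (hxy : x ≤ y) : y * L x ≤ x * L y := by
  have hy : 0 < y := lt_of_lt_of_le hx hxy
  have h := logGamma_combo (x := 1) (y := y + 1) one_pos (by linarith)
    (a := 1 - x / y) (b := x / y) (by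
      have : x / y ≤ 1 := (div_le_one hy).mpr hxy
      linarith) (by positivity) (by ring)
  have hcomb : (1 - x / y) * 1 + x / y * (y + 1) = x + 1 := by field_simp; ring
  rw [hcomb, Real.Gamma_one, Real.log_one, mul_zero, zero_add] at h
  have h' : L x ≤ x / y * L y := h
  have := mul_le_mul_of_nonneg_left h' hy.le
  calc y * L x ≤ y * (x / y * L y) := this
    _ = x * L y := by field_simp

lemma wendel_upper {x : ℝ} (hx : 0 < x) :
    Real.log (Real.Gamma (x + 1/2)) ≤ Real.log (Real.Gamma x) + 1/2 * Real.log x := by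
  have h := logGamma_combo (x := x) (y := x + 1) hx (by linarith)
    (a := 1/2) (b := 1/2) (by norm_num) (by norm_num) (by norm_num)
  have hcomb : (1:ℝ)/2 * x + 1/2 * (x + 1) = x + 1/2 := by ring
  have hΓ : Real.Gamma (x + 1) = x * Real.Gamma x := Real.Gamma_add_one hx.ne'
  rw [hcomb, hΓ, Real.log_mul hx.ne' (Real.Gamma_pos_of_pos hx).ne'] at h
  linarith

lemma wendel_lower {x : ℝ} (hx : 1/2 < x) :
    Real.log (Real.Gamma x) + 1/2 * Real.log (x - 1/2) ≤
      Real.log (Real.Gamma (x + 1/2)) := by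
  have h0 : (0:ℝ) < x - 1/2 := by linarith
  have h := logGamma_combo (x := x - 1/2) (y := x + 1/2) h0 (by linarith)
    (a := 1/2) (b := 1/2) (by norm_num) (by norm_num) (by norm_num)
  have hcomb : (1:ℝ)/2 * (x - 1/2) + 1/2 * (x + 1/2) = x := by ring
  have hΓ : Real.Gamma (x + 1/2) = (x - 1/2) * Real.Gamma (x - 1/2) := by
    have : x + 1/2 = (x - 1/2) + 1 := by ring
    rw [this, Real.Gamma_add_one h0.ne']
  rw [hcomb] at h
  rw [hΓ, Real.log_mul h0.ne' (Real.Gamma_pos_of_pos h0).ne'] at h ⊢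
  linarith

def Q (c : ℝ) : Prop := c * Real.log (c + 1) - c - 1/2 < L c

lemma lemC_step {c : ℝ} (hc : 0 < c) (h : Q c) : Q (c + 1) := by
  unfold Q at h ⊢
  have h1 : L (c + 1) = Real.log (c + 1) + L c := L_add_one hc
  have h2 : Real.log (c + 1 + 1) - Real.log (c + 1) ≤ 1 / (c + 1) := by
    rw [← Real.log_div (by linarith) (by linarith)]
    have h3 := Real.log_le_sub_one_of_pos (x := (c + 1 + 1) / (c + 1)) (by positivity)
    have h4 : (c + 1 + 1) / (c + 1) - 1 = 1 / (c + 1) := by field_simp; ring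
    linarith
  have h5 : (c + 1) * (Real.log (c + 1 + 1) - Real.log (c + 1)) ≤ (c + 1) * (1 / (c + 1)) :=
    mul_le_mul_of_nonneg_left h2 (by linarith)
  have h6 : (c + 1) * (1 / (c + 1)) = 1 := by field_simp
  nlinarith

lemma Q_half : Q (1/2) := by
  unfold Q
  have hΓ : Real.Gamma ((1:ℝ)/2 + 1) = Real.sqrt π / 2 := by
    rw [Real.Gamma_add_one (by norm_num), Real.Gamma_one_half_eq]; ring
  have hlog : Real.log ((1:ℝ)/2 + 1) ≤ 1/2 := by
    have := Real.log_le_sub_one_of_pos (x := (3:ℝ)/2) (by norm_num)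
    norm_num at this ⊢; linarith
  have h7 : (7:ℝ)/4 ≤ Real.exp (3/4) := by
    have := Real.add_one_le_exp ((3:ℝ)/4); linarith
  have hinv : Real.exp (-(3/4)) ≤ 4/7 := by
    rw [Real.exp_neg]
    nlinarith [Real.exp_pos ((3:ℝ)/4), mul_inv_cancel₀ (Real.exp_pos ((3:ℝ)/4)).ne']
  have hsqrt : (8:ℝ)/7 < Real.sqrt π := by
    rw [show (8:ℝ)/7 = Real.sqrt ((8/7)^2) by rw [Real.sqrt_sq (by norm_num)]]
    exact Real.sqrt_lt_sqrt (by positivity) (by nlinarith [Real.pi_gt_three])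
  have hexp : Real.exp (-(3/4)) < Real.sqrt π / 2 := by linarith
  have hL : -(3/4) < L ((1:ℝ)/2) := by
    rw [L, hΓ, ← Real.log_exp (-(3/4))]
    exact Real.log_lt_log (Real.exp_pos _) hexp
  nlinarith

lemma Q_one : Q 1 := by
  unfold Q
  have hΓ : L (1:ℝ) = 0 := by rw [L]; norm_num [Real.Gamma_two]
  have hlog : Real.log ((1:ℝ) + 1) ≤ 1 := by
    have := Real.log_le_sub_one_of_pos (x := (2:ℝ)) (by norm_num)
    norm_num at this ⊢; linarith
  rw [hΓ]
  norm_num at hlog ⊢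
  linarith

lemma lemC : ∀ m : ℕ, 1 ≤ m → Q ((m:ℝ)/2) := by
  have key : ∀ j : ℕ, Q ((j:ℝ)/2 + 1/2) ∧ Q ((j:ℝ)/2 + 1) := by
    intro j
    induction j with
    | zero =>
      constructor
      · rw [show ((0:ℕ):ℝ)/2 + 1/2 = 1/2 by norm_num]; exact Q_half
      · rw [show ((0:ℕ):ℝ)/2 + 1 = 1 by norm_num]; exact Q_one
    | succ i ih =>
      constructor
      · rw [show ((i+1:ℕ):ℝ)/2 + 1/2 = (i:ℝ)/2 + 1 by push_cast; ring]
        exact ih.2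
      · rw [show ((i+1:ℕ):ℝ)/2 + 1 = ((i:ℝ)/2 + 1/2) + 1 by push_cast; ring]
        exact lemC_step (by positivity) ih.1
  intro m hm
  obtain ⟨j, rfl⟩ := Nat.exists_eq_add_of_le hm
  rw [show ((1+j:ℕ):ℝ)/2 = (j:ℝ)/2 + 1/2 by push_cast; ring]
  exact (key j).1

/-- Lemma D: `log Γ(c+1) < c log(c+1/2)` at half-integers. -/
def D (c : ℝ) : Prop := L c < c * Real.log (c + 1/2)

lemma lemD_step {c : ℝ} (hc : 0 < c) (h : D c) : D (c + 1) := by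
  unfold D at h ⊢
  have h1 : L (c + 1) = Real.log (c + 1) + L c := L_add_one hc
  have h2 : Real.log (c + 1) ≤ Real.log (c + 1 + 1/2) :=
    Real.log_le_log (by linarith) (by linarith)
  have h3 : Real.log (c + 1/2) ≤ Real.log (c + 1 + 1/2) :=
    Real.log_le_log (by linarith) (by linarith)
  have h4 : c * Real.log (c + 1/2) ≤ c * Real.log (c + 1 + 1/2) :=
    mul_le_mul_of_nonneg_left h3 hc.le
  nlinarith

lemma D_half : D (1/2) := by
  unfold D
  have hΓ : Real.Gamma ((1:ℝ)/2 + 1) = Real.sqrt π / 2 := by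
    rw [Real.Gamma_add_one (by norm_num), Real.Gamma_one_half_eq]; ring
  have hsqrt : Real.sqrt π < 2 := by
    rw [show (2:ℝ) = Real.sqrt 4 by rw [show (4:ℝ) = 2^2 by norm_num, Real.sqrt_sq (by norm_num)]]
    exact Real.sqrt_lt_sqrt (le_of_lt Real.pi_pos) (by nlinarith [Real.pi_lt_d2])
  have hL : L ((1:ℝ)/2) < 0 := by
    rw [L, hΓ]
    apply Real.log_neg (by positivity) (by linarith)
  rw [show ((1:ℝ)/2 + 1/2 : ℝ) = 1 by norm_num, Real.log_one]
  linarith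

lemma D_one : D 1 := by
  unfold D
  have hΓ : L (1:ℝ) = 0 := by rw [L]; norm_num [Real.Gamma_two]
  rw [hΓ, one_mul]
  exact Real.log_pos (by norm_num)

lemma lemD : ∀ m : ℕ, 1 ≤ m → D ((m:ℝ)/2) := by
  have key : ∀ j : ℕ, D ((j:ℝ)/2 + 1/2) ∧ D ((j:ℝ)/2 + 1) := by
    intro j
    induction j with
    | zero =>
      constructor
      · rw [show ((0:ℕ):ℝ)/2 + 1/2 = 1/2 by norm_num]; exact D_half
      · rw [show ((0:ℕ):ℝ)/2 + 1 = 1 by norm_num]; exact D_one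
    | succ i ih =>
      constructor
      · rw [show ((i+1:ℕ):ℝ)/2 + 1/2 = (i:ℝ)/2 + 1 by push_cast; ring]
        exact ih.2
      · rw [show ((i+1:ℕ):ℝ)/2 + 1 = ((i:ℝ)/2 + 1/2) + 1 by push_cast; ring]
        exact lemD_step (by positivity) ih.1
  intro m hm
  obtain ⟨j, rfl⟩ := Nat.exists_eq_add_of_le hm
  rw [show ((1+j:ℕ):ℝ)/2 = (j:ℝ)/2 + 1/2 by push_cast; ring]
  exact (key j).1

lemma stepLower (m : ℕ) (hm : 1 ≤ m) :
    (m:ℝ)/2 * L ((m:ℝ)/2 + 1/2) - ((m:ℝ)/2 + 1/2) * L ((m:ℝ)/2) < (m:ℝ)/4 + 1/4 := by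
  set c := (m:ℝ)/2 with hc
  have hc0 : 0 < c := by rw [hc]; positivity
  have hw := wendel_upper (x := c + 1) (by linarith)
  rw [show c + 1 + 1/2 = (c + 1/2) + 1 by ring] at hw
  have hw' : L (c + 1/2) ≤ L c + 1/2 * Real.log (c + 1) := hw
  have hC := lemC m hm
  rw [← hc] at hC
  unfold Q at hC
  have hmul := mul_le_mul_of_nonneg_left hw' hc0.le
  have : (m:ℝ)/4 = c/2 := by rw [hc]; ring
  rw [this]
  nlinarith

lemma stepUpper (m : ℕ) (hm : 1 ≤ m) :
    ((m:ℝ)/2 + 1/2) * L ((m:ℝ)/2) < (m:ℝ)/2 * L ((m:ℝ)/2 + 1/2) := by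
  set c := (m:ℝ)/2 with hc
  have hc0 : 0 < c := by rw [hc]; positivity
  have hw := wendel_lower (x := c + 1) (by linarith)
  rw [show c + 1 + 1/2 = (c + 1/2) + 1 by ring, show c + 1 - 1/2 = c + 1/2 by ring] at hw
  have hw' : L c + 1/2 * Real.log (c + 1/2) ≤ L (c + 1/2) := hw
  have hD := lemD m hm
  rw [← hc] at hD
  unfold D at hD
  have hmul := mul_le_mul_of_nonneg_left hw' hc0.le
  nlinarith

/-- `H m = log Γ(m/2+1) / (m/2)`. -/
def H (m : ℕ) : ℝ := L ((m:ℝ)/2) / ((m:ℝ)/2)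

lemma hstep (m : ℕ) (hm : 1 ≤ m) : H (m+1) < H m + 1/(m:ℝ) := by
  have hc0 : (0:ℝ) < (m:ℝ)/2 := by
    have : (0:ℝ) < (m:ℝ) := by exact_mod_cast hm
    linarith
  have key := stepLower m hm
  simp only [H]
  push_cast
  set c := (m:ℝ)/2 with hc
  have e : ((m:ℝ) + 1)/2 = c + 1/2 := by rw [hc]; ring
  have em : (m:ℝ) = 2*c := by rw [hc]; ring
  rw [e, em]
  rw [div_lt_iff₀ (by linarith : (0:ℝ) < c + 1/2)]
  have expand : (L c / c + 1/(2*c)) * (c + 1/2) = ((c + 1/2) * L c + (c/2 + 1/4)) / c := by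
    field_simp; ring
  rw [expand, lt_div_iff₀ hc0]
  have : (m:ℝ)/4 = c/2 := by rw [hc]; ring
  nlinarith [key, this]

lemma Hsum : ∀ k : ℕ, 1 ≤ k → ∀ m : ℕ, 1 ≤ m → H (m + k) < H m + (k:ℝ)/(m:ℝ) := by
  intro k hk
  induction k, hk using Nat.le_induction with
  | base =>
    intro m hm
    have := hstep m hm
    simpa using this
  | succ k hk ih =>
    intro m hm
    have h1 := ih (m+1) (by omega)
    have h2 := hstep m hm
    have hm0 : (0:ℝ) < (m:ℝ) := by exact_mod_cast hm
    have h3 : (k:ℝ)/((m:ℝ)+1) ≤ (k:ℝ)/(m:ℝ) := by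
      apply div_le_div_of_nonneg_left (by positivity) hm0 (by linarith)
    rw [show m + (k+1) = (m+1) + k by omega]
    push_cast at h1 h2 h3 ⊢
    have : ((k:ℝ)+1)/(m:ℝ) = (k:ℝ)/(m:ℝ) + 1/(m:ℝ) := by field_simp
    rw [this]
    linarith

lemma vol_eq (m : ℕ) (hm : 1 ≤ m) :
    unitBallVol m = Real.sqrt π ^ m / Real.Gamma ((m:ℝ)/2 + 1) := by
  have : Nonempty (Fin m) := Fin.pos_iff_nonempty.mp hm
  rw [unitBallVol, EuclideanSpace.volume_ball, Fintype.card_fin,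
    ENNReal.ofReal_one, one_pow, one_mul,
    ENNReal.toReal_ofReal
      (div_nonneg (pow_nonneg (Real.sqrt_nonneg _) _)
        (Real.Gamma_pos_of_pos (by positivity)).le)]

end GammaBoundsAux

open GammaBoundsAux in
/-- `e^{-k/2} < γ_{n,k} = ω_n^{(n-k)/n}/ω_{n-k} < 1`. -/
theorem gamma_bounds {n k : ℕ} (hn : 2 ≤ n) (hk : 1 ≤ k) (hkn : k ≤ n - 1) :
    Real.exp (-(k : ℝ) / 2)
        < unitBallVol n ^ (((n : ℝ) - k) / n) / unitBallVol (n - k) ∧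
      unitBallVol n ^ (((n : ℝ) - k) / n) / unitBallVol (n - k) < 1 := by
  have hkn' : k ≤ n := le_trans hkn (Nat.sub_le n 1)
  have hnk1 : 1 ≤ n - k := by omega
  have hn1 : 1 ≤ n := by omega
  have hnR : (0:ℝ) < n := by exact_mod_cast (by omega : 0 < n)
  have hc : ((n - k : ℕ) : ℝ) = (n:ℝ) - k := by
    push_cast [Nat.cast_sub hkn']; ring
  have hmR : (0:ℝ) < ((n - k : ℕ) : ℝ) := by exact_mod_cast (by omega : 0 < n - k)
  set p := Real.sqrt Real.pi with hp0
  have hp : 0 < p := Real.sqrt_pos.mpr Real.pi_pos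
  set t := ((n:ℝ) - k)/(n:ℝ) with ht0
  have hA : 0 < Real.Gamma ((n:ℝ)/2 + 1) := Real.Gamma_pos_of_pos (by positivity)
  have hB : 0 < Real.Gamma (((n - k : ℕ):ℝ)/2 + 1) := Real.Gamma_pos_of_pos (by positivity)
  set A := Real.Gamma ((n:ℝ)/2 + 1) with hA0
  set B := Real.Gamma (((n - k : ℕ):ℝ)/2 + 1) with hB0
  clear_value p t A B
  have hAt : 0 < A ^ t := Real.rpow_pos_of_pos hA t
  -- ratio = B / A^t
  have hpow : ((p ^ n : ℝ)) ^ t = p ^ (n - k : ℕ) := by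
    rw [← Real.rpow_natCast p n, ← Real.rpow_mul hp.le]
    rw [show (n:ℝ) * t = ((n - k : ℕ):ℝ) by rw [ht0, hc]; field_simp]
    exact Real.rpow_natCast p (n - k)
  have hratio : unitBallVol n ^ t / unitBallVol (n - k) = B / A ^ t := by
    rw [vol_eq n hn1, vol_eq (n - k) hnk1, ← hp0, ← hA0, ← hB0,
      Real.div_rpow (by positivity) hA.le, hpow]
    rw [div_div_div_comm]
    rw [div_self (by positivity : (p:ℝ) ^ (n - k : ℕ) ≠ 0)]
    rw [one_div, inv_div]
  rw [hratio]
  -- reduce to log inequalities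
  have gen : ∀ x v : ℝ, x ≠ 0 → v = x * (v / x) := by
    intro x v hx; field_simp
  have hlogA : Real.log A = (n:ℝ)/2 * H n := by
    rw [hA0]
    exact gen ((n:ℝ)/2) (L ((n:ℝ)/2)) (by positivity)
  have hlogB : Real.log B = ((n - k : ℕ):ℝ)/2 * H (n - k) := by
    rw [hB0]
    exact gen (((n - k : ℕ):ℝ)/2) (L (((n - k : ℕ):ℝ)/2)) (by positivity)
  have hbt : (n:ℝ)/2 * t = ((n - k : ℕ):ℝ)/2 := by rw [ht0, hc]; field_simp
  -- H monotonicity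
  have hHmono : H (n - k) < H n := by
    have hx : (0:ℝ) < ((n - k : ℕ):ℝ)/2 := by positivity
    have hn1R : ((n - 1 : ℕ):ℝ) = (n:ℝ) - 1 := by
      push_cast [Nat.cast_sub hn1]; ring
    have hy : (0:ℝ) < ((n - 1 : ℕ):ℝ)/2 := by
      rw [hn1R]; have : (2:ℝ) ≤ n := by exact_mod_cast hn
      linarith
    have h1 : H (n - k) ≤ H (n - 1) := by
      have hxy : ((n - k : ℕ):ℝ)/2 ≤ ((n - 1 : ℕ):ℝ)/2 := by
        have : ((n - k : ℕ):ℝ) ≤ ((n - 1 : ℕ):ℝ) := by exact_mod_cast Nat.sub_le_sub_left hk n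
        linarith
      have := slope_mono hx hxy
      rw [H, H, div_le_div_iff₀ hx hy]
      nlinarith
    have h2 : H (n - 1) < H n := by
      have hs := stepUpper (n - 1) (by omega)
      have e : ((n - 1 : ℕ):ℝ)/2 + 1/2 = (n:ℝ)/2 := by rw [hn1R]; ring
      rw [e] at hs
      rw [H, H, div_lt_div_iff₀ hy (by positivity : (0:ℝ) < (n:ℝ)/2)]
      nlinarith [hs]
    linarith
  have hHsum : H n < H (n - k) + (k:ℝ)/((n - k : ℕ):ℝ) := by
    have := Hsum k hk (n - k) hnk1
    rwa [show n - k + k = n by omega] at this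
  constructor
  · -- lower bound
    rw [lt_div_iff₀ hAt]
    have h1 : Real.exp (-(k:ℝ)/2) * A ^ t = Real.exp (-(k:ℝ)/2 + Real.log A * t) := by
      rw [Real.exp_add, Real.rpow_def_of_pos hA]
    rw [h1, show B = Real.exp (Real.log B) from (Real.exp_log hB).symm]
    apply Real.exp_lt_exp.mpr
    rw [hlogA, hlogB]
    have key : ((n - k : ℕ):ℝ)/2 * (H n - H (n - k)) < (k:ℝ)/2 := by
      have hlt : H n - H (n - k) < (k:ℝ)/((n - k : ℕ):ℝ) := by linarith
      have := mul_lt_mul_of_pos_left hlt (by positivity : (0:ℝ) < ((n - k : ℕ):ℝ)/2)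
      have e2 : ∀ a b : ℝ, a ≠ 0 → a/2 * (b/a) = b/2 := by
        intro a b ha; field_simp
      rw [e2 _ _ hmR.ne'] at this
      linarith
    have e3 : (n:ℝ)/2 * H n * t = ((n - k : ℕ):ℝ)/2 * H n := by
      rw [mul_right_comm, hbt]
    rw [mul_sub] at key
    rw [e3]
    linarith [key]
  · -- upper bound
    rw [div_lt_one hAt]
    rw [show B = Real.exp (Real.log B) from (Real.exp_log hB).symm,
      Real.rpow_def_of_pos hA]
    apply Real.exp_lt_exp.mpr
    rw [hlogA, hlogB]
    have e3 : (n:ℝ)/2 * H n * t = ((n - k : ℕ):ℝ)/2 * H n := by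
      rw [mul_right_comm, hbt]
    rw [e3]
    exact mul_lt_mul_of_pos_left hHmono (by positivity)
end
end

section
/- For all integers $n \ge 2$ and $1 \le k \le n-1$, one has $\omega_{n-k}^n / \omega_n^{n-k} \le e^{kn/2}$, where $\omega_m$ is the volume of the unit Euclidean ball in $\mathbb{R}^m$. -/
open MeasureTheory

noncomputable section

open Real in
lemma unitBallVol_eq (m : ℕ) (hm : 0 < m) :
    unitBallVol m = Real.sqrt π ^ m / Real.Gamma (m / 2 + 1) := by
  have : Nonempty (Fin m) := ⟨⟨0, hm⟩⟩
  have hG : 0 < Real.Gamma ((m : ℝ) / 2 + 1) :=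
    Real.Gamma_pos_of_pos (by positivity)
  rw [unitBallVol, EuclideanSpace.volume_ball, Fintype.card_fin]
  rw [ENNReal.ofReal_one, one_pow, one_mul, ENNReal.toReal_ofReal (by positivity)]

open Real in
/-- Stirling-type lower bound at half-integers: `Γ(m/2+1) ≥ ((m/2+1)/e)^(m/2)`. -/
lemma gamma_half_lower (m : ℕ) :
    (((m : ℝ) / 2 + 1) / Real.exp 1) ^ ((m : ℝ) / 2) ≤ Real.Gamma ((m : ℝ) / 2 + 1) := by
  induction m using Nat.strong_induction_on with
  | _ m ih =>
    match m with
    | 0 => simp [Real.Gamma_one]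
    | 1 =>
      have h1 : ((1 : ℕ) : ℝ) / 2 + 1 = 3 / 2 := by norm_num
      rw [h1]
      have hG : Real.Gamma (3 / 2) = Real.sqrt π / 2 := by
        have : (3 : ℝ) / 2 = 1 / 2 + 1 := by norm_num
        rw [this, Real.Gamma_add_one (by norm_num), Real.Gamma_one_half_eq]
        ring
      rw [hG]
      have he : (2.7182818283 : ℝ) < Real.exp 1 := Real.exp_one_gt_d9
      have hpi : (3.141592 : ℝ) < π := Real.pi_gt_d6
      have hbase : (0 : ℝ) ≤ 3 / 2 / Real.exp 1 := by positivity
      set X : ℝ := (3 / 2 / Real.exp 1 : ℝ) ^ (((1:ℕ):ℝ) / 2) with hX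
      have hXnn : 0 ≤ X := Real.rpow_nonneg hbase _
      have hX2 : X ^ 2 = 3 / 2 / Real.exp 1 := by
        rw [hX, ← Real.rpow_natCast _ 2, ← Real.rpow_mul hbase]
        norm_num
      have hY2 : (Real.sqrt π / 2) ^ 2 = π / 4 := by
        rw [div_pow, Real.sq_sqrt Real.pi_pos.le]
        norm_num
      have hYnn : (0:ℝ) ≤ Real.sqrt π / 2 := by positivity
      have hsq : X ^ 2 ≤ (Real.sqrt π / 2) ^ 2 := by
        rw [hX2, hY2, div_le_div_iff₀ (by positivity) (by norm_num)]
        nlinarith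
      nlinarith [hsq, hXnn, hYnn]
    | (j + 2) =>
      have hj := ih j (by omega)
      have hb : (0 : ℝ) < (j : ℝ) / 2 + 1 := by positivity
      have hstep : Real.Gamma (((j + 2 : ℕ) : ℝ) / 2 + 1)
          = ((j : ℝ) / 2 + 1) * Real.Gamma ((j : ℝ) / 2 + 1) := by
        have : ((j + 2 : ℕ) : ℝ) / 2 + 1 = ((j : ℝ) / 2 + 1) + 1 := by
          push_cast; ring
        rw [this, Real.Gamma_add_one hb.ne']
      rw [hstep]
      set t : ℝ := (j : ℝ) / 2 + 1 with ht
      have ht1 : (1 : ℝ) ≤ t := by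
        have : (0:ℝ) ≤ (j : ℝ) / 2 := by positivity
        rw [ht]; linarith
      have htpos : (0 : ℝ) < t := by linarith
      -- key : ((t+1)/e)^t ≤ t * (t/e)^(t-1)
      have hkey : ((t + 1) / Real.exp 1) ^ t ≤ t * (t / Real.exp 1) ^ (t - 1) := by
        have he : (0 : ℝ) < Real.exp 1 := Real.exp_pos 1
        have h1t : (1 + 1 / t) ^ t ≤ Real.exp 1 := by
          have : (1 + 1 / t : ℝ) ≤ Real.exp (1 / t) := by
            have := Real.add_one_le_exp (1 / t)
            linarith
          calc (1 + 1 / t : ℝ) ^ t ≤ (Real.exp (1 / t)) ^ t := by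
                apply Real.rpow_le_rpow (by positivity) this htpos.le
            _ = Real.exp 1 := by
                rw [← Real.exp_one_rpow (1 / t), ← Real.rpow_mul he.le]
                rw [one_div, inv_mul_cancel₀ htpos.ne', Real.rpow_one]
      -- rewrite both sides
        have hL : ((t + 1) / Real.exp 1) ^ t = (1 + 1 / t) ^ t * (t / Real.exp 1) ^ t := by
          rw [← Real.mul_rpow (by positivity) (by positivity)]
          congr 1
          field_simp
        have hR : t * (t / Real.exp 1) ^ (t - 1) = Real.exp 1 * (t / Real.exp 1) ^ t := by
          have : (t / Real.exp 1) ^ t = (t / Real.exp 1) ^ (t - 1) * (t / Real.exp 1) := by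
            rw [← Real.rpow_add_one (by positivity) (t - 1)]
            norm_num
          rw [this]
          field_simp
        rw [hL, hR]
        exact mul_le_mul_of_nonneg_right h1t (Real.rpow_nonneg (by positivity) t)
      have hcast : ((j + 2 : ℕ) : ℝ) / 2 + 1 = t + 1 := by rw [ht]; push_cast; ring
      have hcast2 : ((j + 2 : ℕ) : ℝ) / 2 = t := by rw [ht]; push_cast; ring
      rw [hcast, hcast2]
      calc ((t + 1) / Real.exp 1) ^ t ≤ t * (t / Real.exp 1) ^ (t - 1) := hkey
        _ ≤ t * Real.Gamma t := by
            apply mul_le_mul_of_nonneg_left _ htpos.le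
            have hjt : t - 1 = (j : ℝ) / 2 := by rw [ht]; ring
            rw [hjt, ht]
            exact hj

open Real in
/-- Convexity slope bound: `logΓ(x+1) − logΓ(y+1) ≤ (x−y)·log(x+1)` for `0 < y ≤ x`. -/
lemma logGamma_slope (x y : ℝ) (hy : 0 < y) (hxy : y ≤ x) :
    Real.log (Real.Gamma (x + 1)) - Real.log (Real.Gamma (y + 1))
      ≤ (x - y) * Real.log (x + 1) := by
  rcases eq_or_lt_of_le hxy with rfl | h
  · simp
  · have hx : (0 : ℝ) < x := lt_trans hy h
    have hconv := Real.convexOn_log_Gamma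
    have hmono := ConvexOn.slope_mono_adjacent hconv
      (show y + 1 ∈ Set.Ioi (0:ℝ) by simp; linarith)
      (show x + 2 ∈ Set.Ioi (0:ℝ) by simp; linarith)
      (show y + 1 < x + 1 by linarith) (show x + 1 < x + 2 by linarith)
    simp only [Function.comp_apply] at hmono
    have hG2 : Real.Gamma (x + 2) = (x + 1) * Real.Gamma (x + 1) := by
      have : x + 2 = (x + 1) + 1 := by ring
      rw [this, Real.Gamma_add_one (by linarith)]
    have hGpos : 0 < Real.Gamma (x + 1) := Real.Gamma_pos_of_pos (by linarith)
    have hlog2 : Real.log (Real.Gamma (x + 2)) - Real.log (Real.Gamma (x + 1))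
        = Real.log (x + 1) := by
      rw [hG2, Real.log_mul (by linarith) hGpos.ne']; ring
    have h1 : (x + 1) - (y + 1) = x - y := by ring
    have h2 : (x + 2) - (x + 1) = 1 := by ring
    rw [h1, h2, div_one, hlog2] at hmono
    have := (div_le_iff₀ (by linarith : (0:ℝ) < x - y)).mp hmono
    linarith

/-- `ω_{n-k}^n / ω_n^{n-k} ≤ e^{kn/2}`. -/
theorem omega_ratio_bound {n k : ℕ} (hn : 2 ≤ n) (hk : 1 ≤ k) (hkn : k ≤ n - 1) :
    unitBallVol (n - k) ^ n / unitBallVol n ^ (n - k) ≤ Real.exp ((k : ℝ) * n / 2) := by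
  have hkn' : k ≤ n := le_trans hkn (Nat.sub_le n 1)
  have hm : 1 ≤ n - k := by omega
  set m := n - k with hmdef
  have hmcast : ((m : ℕ) : ℝ) = (n : ℝ) - (k : ℝ) := by
    rw [hmdef]; push_cast [Nat.cast_sub hkn']; ring
  set a : ℝ := (n : ℝ) / 2 with ha
  set b : ℝ := (m : ℝ) / 2 with hb
  have hbpos : (0 : ℝ) < b := by rw [hb]; positivity
  have hb12 : (1 : ℝ) / 2 ≤ b := by
    rw [hb]
    have : (1 : ℝ) ≤ (m : ℝ) := by exact_mod_cast hm
    linarith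
  have hab : b < a := by
    rw [ha, hb, hmcast]
    have : (1 : ℝ) ≤ (k : ℝ) := by exact_mod_cast hk
    linarith
  have hGa : 0 < Real.Gamma (a + 1) := Real.Gamma_pos_of_pos (by positivity)
  have hGb : 0 < Real.Gamma (b + 1) := Real.Gamma_pos_of_pos (by positivity)
  set La := Real.log (Real.Gamma (a + 1)) with hLa
  set Lb := Real.log (Real.Gamma (b + 1)) with hLb
  -- Stirling lower bound for Lb
  have hst : b * (Real.log (b + 1) - 1) ≤ Lb := by
    have := gamma_half_lower m
    rw [← hb] at this
    have hlog := Real.log_le_log (by positivity) this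
    rw [Real.log_rpow (by positivity), Real.log_div (by positivity) (Real.exp_pos 1).ne',
      Real.log_exp] at hlog
    exact hlog
  -- slope bound
  have hsl : La - Lb ≤ (a - b) * Real.log (a + 1) := logGamma_slope a b hbpos hab.le
  -- log comparison
  have hloglt : Real.log (a + 1) - Real.log (b + 1) ≤ (a - b) / (b + 1) := by
    have hpos : (0 : ℝ) < (a + 1) / (b + 1) := by positivity
    have := Real.log_le_sub_one_of_pos hpos
    rw [Real.log_div (by positivity) (by positivity)] at this
    have h1 : (a + 1) / (b + 1) - 1 = (a - b) / (b + 1) := by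
      field_simp
      ring
    linarith
  -- main inequality on logs
  have hmain : 2 * b * La - 2 * a * Lb ≤ 2 * a * (a - b) := by
    have hb1 : b / (b + 1) ≤ 1 := by
      rw [div_le_one (by linarith)]; linarith
    have h1 : 2 * b * La - 2 * a * Lb = 2 * b * (La - Lb) - 2 * (a - b) * Lb := by ring
    have h2 : 2 * b * (La - Lb) ≤ 2 * b * ((a - b) * Real.log (a + 1)) :=
      mul_le_mul_of_nonneg_left hsl (by linarith)
    have h3 : -(2 * (a - b) * Lb) ≤ -(2 * (a - b) * (b * (Real.log (b + 1) - 1))) := by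
      have := mul_le_mul_of_nonneg_left hst (by linarith : (0:ℝ) ≤ 2 * (a - b))
      linarith
    have hcomb : 2 * b * La - 2 * a * Lb
        ≤ 2 * (a - b) * (b * (Real.log (a + 1) - Real.log (b + 1)) + b) := by
      rw [h1]; nlinarith
    have h4 : b * (Real.log (a + 1) - Real.log (b + 1)) ≤ b * ((a - b) / (b + 1)) :=
      mul_le_mul_of_nonneg_left hloglt hbpos.le
    have h5 : b * ((a - b) / (b + 1)) ≤ a - b := by
      rw [mul_div_assoc']
      rw [div_le_iff₀ (by linarith : (0:ℝ) < b + 1)]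
      nlinarith
    nlinarith
  -- assemble
  have hvol_m : unitBallVol m = Real.sqrt Real.pi ^ m / Real.Gamma (b + 1) := by
    rw [unitBallVol_eq m (by omega), hb]
  have hvol_n : unitBallVol n = Real.sqrt Real.pi ^ n / Real.Gamma (a + 1) := by
    rw [unitBallVol_eq n (by omega), ha]
  have hsp : (0 : ℝ) < Real.sqrt Real.pi := Real.sqrt_pos.mpr Real.pi_pos
  rw [hvol_m, hvol_n]
  have hratio : (Real.sqrt Real.pi ^ m / Real.Gamma (b + 1)) ^ n
      / (Real.sqrt Real.pi ^ n / Real.Gamma (a + 1)) ^ m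
      = Real.Gamma (a + 1) ^ m / Real.Gamma (b + 1) ^ n := by
    rw [div_pow, div_pow, ← pow_mul, ← pow_mul, Nat.mul_comm n m]
    rw [div_div_div_comm]
    rw [div_self (by positivity : Real.sqrt Real.pi ^ (m*n) ≠ 0), one_div_div]
  rw [hratio]
  -- express as exp
  have hGaexp : Real.Gamma (a + 1) ^ m = Real.exp ((m : ℝ) * La) := by
    rw [hLa, ← Real.exp_log hGa, ← Real.exp_nat_mul]
    rw [Real.log_exp]
  have hGbexp : Real.Gamma (b + 1) ^ n = Real.exp ((n : ℝ) * Lb) := by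
    rw [hLb, ← Real.exp_log hGb, ← Real.exp_nat_mul]
    rw [Real.log_exp]
  rw [hGaexp, hGbexp, ← Real.exp_sub, Real.exp_le_exp]
  have hmr : (m : ℝ) = 2 * b := by rw [hb]; ring
  have hnr : (n : ℝ) = 2 * a := by rw [ha]; ring
  have hkr : (k : ℝ) = 2 * (a - b) := by
    rw [ha, hb, hmcast]; ring
  rw [hmr, hnr, hkr]
  calc 2 * b * La - 2 * a * Lb ≤ 2 * a * (a - b) := hmain
    _ = 2 * (a - b) * (2 * a) / 2 := by ring
end
end
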